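/- Assume v : ℝ≥0 → ℝ is C¹ with v' < 0 on (0,∞) and ρ v'(ρ) non-increasing on ℝ≥0. Let Rᵢ(t), R_{i+1}(t) > 0 be C¹ functions with Ṙᵢ = −(Rᵢ²/ℓ)[v(R_{i+1}) − v(Rᵢ)], and suppose R_{i+1} satisfies z_{i+1}(t) := t R_{i+1}(t)[ẋ_{i+2}(t) − ẋ_{i+1}(t)] ≤ ℓ for all t ≥ 0, where ẋ_{j+1} − ẋ_j is the velocity difference appearing in the dynamics. Then zᵢ(t) := t Rᵢ(t)[v(R_{i+1}(t)) − v(Rᵢ(t))] ≤ ℓ for all t ≥ 0. -/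

import Mathlib

lemma oleinik_aux (ℓ t a b D dvA dvB W : ℝ)
    (hℓ : 0 < ℓ) (ht : 0 < t) (ha : 0 < a) (hb : 0 < b)
    (hDpos : 0 < D) (hz : ℓ ≤ t * a * D) (hw : t * b * W ≤ ℓ)
    (hdvA : dvA < 0) (hdvB : dvB < 0) (hmon : a * dvA ≤ b * dvB) :
    (1 * a + t * (-a^2 / ℓ * D)) * D
      + t * a * (dvB * (-b^2 / ℓ * W) - dvA * (-a^2 / ℓ * D)) ≤ 0 := by
  have h1 : a*D*(1 - t*a*D/ℓ) ≤ 0 :=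
    mul_nonpos_of_nonneg_of_nonpos (mul_pos ha hDpos).le
      (by rw [sub_nonpos, le_div_iff₀ hℓ]; linarith)
  have h2 : 0 ≤ (-(a*dvB*b)/ℓ) * (ℓ - t*b*W) :=
    mul_nonneg (div_nonneg (by nlinarith [mul_pos ha hb]) hℓ.le) (by linarith)
  have h3 : (a^2*dvA/ℓ) * (t*a*D - ℓ) ≤ 0 :=
    mul_nonpos_of_nonpos_of_nonneg
      (div_nonpos_of_nonpos_of_nonneg (by nlinarith [mul_pos ha ha]) hℓ.le) (by linarith)
  have h4 : a*(a*dvA - b*dvB) ≤ 0 :=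
    mul_nonpos_of_nonneg_of_nonpos ha.le (by linarith)
  have key : (1 * a + t * (-a^2 / ℓ * D)) * D
      + t * a * (dvB * (-b^2 / ℓ * W) - dvA * (-a^2 / ℓ * D))
      = a*D*(1 - t*a*D/ℓ) - ((-(a*dvB*b)/ℓ) * (ℓ - t*b*W))
        + (a^2*dvA/ℓ) * (t*a*D - ℓ) + a*(a*dvA - b*dvB) := by
    field_simp
    ring
  rw [key]; linarith

/-- Inductive step of the discrete Oleinik estimate: if the quantity
`z_{i+1}(t) = t R_{i+1}(t) (ẋ_{i+2}(t) - ẋ_{i+1}(t))` associated with the next density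
stays below `ℓ`, then so does `zᵢ(t) = t Rᵢ(t) [v(R_{i+1}(t)) - v(Rᵢ(t))]`.
Here `A = Rᵢ`, `B = R_{i+1}` and `w(t) = ẋ_{i+2}(t) - ẋ_{i+1}(t)` is the velocity
difference driving `B`, i.e. `Ḃ = -(B²/ℓ) w`. -/
theorem ftl_oleinik_inductive_step
    (v : ℝ → ℝ) (hv : ContDiffOn ℝ 1 v (Set.Ici 0))
    (hv' : ∀ ρ : ℝ, 0 < ρ → deriv v ρ < 0)
    (hv2 : AntitoneOn (fun ρ => ρ * deriv v ρ) (Set.Ici 0))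
    (ℓ : ℝ) (hℓ : 0 < ℓ)
    (A B w : ℝ → ℝ)
    (hApos : ∀ t ≥ (0:ℝ), 0 < A t) (hBpos : ∀ t ≥ (0:ℝ), 0 < B t)
    (hAC1 : ContDiff ℝ 1 A) (hBC1 : ContDiff ℝ 1 B)
    (hAode : ∀ t ≥ (0:ℝ), HasDerivAt A (-(A t)^2 / ℓ * (v (B t) - v (A t))) t)
    (hBode : ∀ t ≥ (0:ℝ), HasDerivAt B (-(B t)^2 / ℓ * w t) t)
    (hznext : ∀ t ≥ (0:ℝ), t * B t * w t ≤ ℓ) :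
    ∀ t ≥ (0:ℝ), t * A t * (v (B t) - v (A t)) ≤ ℓ := by
  -- differentiability of v at positive points
  have hvd : ∀ x : ℝ, 0 < x → HasDerivAt v (deriv v x) x := by
    intro x hx
    have h1 : DifferentiableWithinAt ℝ v (Set.Ici 0) x :=
      (hv.differentiableOn one_ne_zero) x (le_of_lt hx)
    exact (h1.differentiableAt (Ici_mem_nhds hx)).hasDerivAt
  -- v is strictly decreasing on [0, ∞)
  have hanti : StrictAntiOn v (Set.Ici 0) := by
    apply strictAntiOn_of_deriv_neg (convex_Ici 0) hv.continuousOn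
    intro x hx
    rw [interior_Ici] at hx
    exact hv' x hx
  intro t ht
  by_contra hcon
  push_neg at hcon
  have ht0 : 0 < t := by
    rcases ht.lt_or_eq with h | h
    · exact h
    · exfalso; rw [← h] at hcon; simp at hcon; linarith
  set z : ℝ → ℝ := fun s => s * A s * (v (B s) - v (A s)) with hzdef
  set z' : ℝ → ℝ := fun s =>
    (1 * A s + s * (-(A s)^2 / ℓ * (v (B s) - v (A s)))) * (v (B s) - v (A s))
      + s * A s * (deriv v (B s) * (-(B s)^2 / ℓ * w s)
          - deriv v (A s) * (-(A s)^2 / ℓ * (v (B s) - v (A s)))) with hz'def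
  -- z is differentiable with derivative z' on [0, ∞)
  have hderiv : ∀ s : ℝ, 0 ≤ s → HasDerivAt z (z' s) s := by
    intro s hs
    have hA := hAode s hs
    have hB := hBode s hs
    have h1 : HasDerivAt (fun u => u * A u)
        (1 * A s + s * (-(A s)^2 / ℓ * (v (B s) - v (A s)))) s :=
      (hasDerivAt_id s).mul hA
    have hvB : HasDerivAt (fun u => v (B u)) (deriv v (B s) * (-(B s)^2 / ℓ * w s)) s :=
      (hvd (B s) (hBpos s hs)).comp s hB
    have hvA : HasDerivAt (fun u => v (A u))
        (deriv v (A s) * (-(A s)^2 / ℓ * (v (B s) - v (A s)))) s :=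
      (hvd (A s) (hApos s hs)).comp s hA
    exact h1.mul (hvB.sub hvA)
  -- key differential inequality
  have hkey : ∀ s : ℝ, 0 < s → ℓ ≤ z s → z' s ≤ 0 := by
    intro s hs hzs
    have ha := hApos s hs.le
    have hb := hBpos s hs.le
    simp only [hzdef] at hzs
    have hDpos : 0 < v (B s) - v (A s) := by
      by_contra h
      push_neg at h
      nlinarith [mul_pos hs ha]
    have hba : B s ≤ A s := by
      by_contra h
      push_neg at h
      have := hanti (Set.mem_Ici.mpr ha.le) (Set.mem_Ici.mpr hb.le) h
      linarith
    have hmon : A s * deriv v (A s) ≤ B s * deriv v (B s) :=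
      hv2 (Set.mem_Ici.mpr hb.le) (Set.mem_Ici.mpr ha.le) hba
    simp only [hz'def]
    exact oleinik_aux ℓ s (A s) (B s) _ _ _ (w s) hℓ hs ha hb hDpos hzs
      (hznext s hs.le) (hv' _ ha) (hv' _ hb) hmon
  -- continuity of z on [0, ∞)
  have hzc : ContinuousOn z (Set.Ici 0) := by
    apply ContinuousOn.mul
    · exact (continuousOn_id.mul hAC1.continuous.continuousOn)
    · exact (hv.continuousOn.comp hBC1.continuous.continuousOn
        (fun s hs => Set.mem_Ici.mpr (hBpos s hs).le)).sub
        (hv.continuousOn.comp hAC1.continuous.continuousOn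
        (fun s hs => Set.mem_Ici.mpr (hApos s hs).le))
  -- the last time z stays ≤ ℓ
  set S : Set ℝ := {s ∈ Set.Icc 0 t | z s ≤ ℓ} with hSdef
  have hS0 : (0:ℝ) ∈ S := by
    refine ⟨⟨le_refl 0, ht⟩, ?_⟩
    show (0:ℝ) * A 0 * (v (B 0) - v (A 0)) ≤ ℓ
    rw [zero_mul, zero_mul]; exact hℓ.le
  have hScl : IsClosed S := by
    have heq : S = Set.Icc 0 t ∩ z ⁻¹' Set.Iic ℓ := by
      ext s; simp [hSdef, Set.mem_sep_iff, and_comm]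
    rw [heq]
    exact (hzc.mono (fun x hx => hx.1)).preimage_isClosed_of_isClosed isClosed_Icc isClosed_Iic
  have hScpt : IsCompact S := isCompact_Icc.of_isClosed_subset hScl (fun x hx => hx.1)
  have hmem : sSup S ∈ S := hScpt.sSup_mem ⟨0, hS0⟩
  set s₀ := sSup S with hs₀def
  have hs₀0 : 0 ≤ s₀ := hmem.1.1
  have hs₀t : s₀ < t := by
    rcases lt_or_eq_of_le hmem.1.2 with h | h
    · exact h
    · exfalso; have := hmem.2; rw [h] at this; exact absurd this (not_le.mpr hcon)
  have habove : ∀ u, s₀ < u → u ≤ t → ℓ < z u := by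
    intro u hu hut
    by_contra h
    push_neg at h
    have hmemu : u ∈ S := ⟨⟨le_trans hs₀0 hu.le, hut⟩, h⟩
    exact absurd (le_csSup hScpt.bddAbove hmemu) (not_le.mpr hu)
  obtain ⟨c, hc, hceq⟩ := exists_hasDerivAt_eq_slope z z' hs₀t
    (hzc.mono (fun x hx => le_trans hs₀0 hx.1))
    (fun x hx => hderiv x (le_trans hs₀0 hx.1.le))
  have hc0 : 0 < c := lt_of_le_of_lt hs₀0 hc.1
  have hzcℓ : ℓ ≤ z c := (habove c hc.1 hc.2.le).le
  have hle := hkey c hc0 hzcℓ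
  rw [hceq] at hle
  have hslope : 0 < (z t - z s₀) / (t - s₀) :=
    div_pos (by have hzt : ℓ < z t := hcon; linarith [hmem.2, hzt]) (by linarith)
  linarith
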